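/- The TA-SCL Markov chain is aperiodic: for every state i ∈ {0,1,…,S}, the greatest common divisor of the set {k ≥ 1 : the (i,i) entry of P^k is strictly positive} equals 1. -/

import Mathlib

/-- Transition matrix of the TA-SCL Markov chain with parameters `βn`, `βd`
(speed gain `βn/βd`), buffer size `ζ`, and small-decoder block error rate `ε`.
States are `0, 1, …, S` where `S = βn*ζ + βn`. -/
def tasclP (βn βd ζ : ℕ) (ε : ℝ) :
    Matrix (Fin (βn * ζ + βn + 1)) (Fin (βn * ζ + βn + 1)) ℝ :=
  fun s j =>
    if (s : ℕ) ≤ βd then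
      -- idle state: goes to 0 with prob 1-ε, to βn with prob ε
      (if (j : ℕ) = 0 then 1 - ε else 0) + (if (j : ℕ) = βn then ε else 0)
    else if (s : ℕ) ≤ βn * ζ + βd then
      -- safe state: goes to s-βd with prob 1-ε, to s+βn-βd with prob ε
      (if (j : ℕ) = (s : ℕ) - βd then 1 - ε else 0) +
        (if (j : ℕ) = (s : ℕ) + βn - βd then ε else 0)
    else
      -- hazard state: goes to s-βd with prob 1
      if (j : ℕ) = (s : ℕ) - βd then 1 else 0

section Aux

variable {βn βd ζ : ℕ} {ε : ℝ}

local notation "N" => βn * ζ + βn + 1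

lemma tascl_nonneg (hε0 : 0 < ε) (hε1 : ε < 1) (i j : Fin N) :
    0 ≤ tasclP βn βd ζ ε i j := by
  simp only [tasclP]
  split_ifs <;> linarith

lemma tascl_pow_nonneg (hε0 : 0 < ε) (hε1 : ε < 1) (k : ℕ) (i j : Fin N) :
    0 ≤ (tasclP βn βd ζ ε ^ k) i j := by
  induction k generalizing i j with
  | zero =>
      rw [pow_zero]
      by_cases h : i = j
      · subst h; rw [Matrix.one_apply_eq]; norm_num
      · rw [Matrix.one_apply_ne h]
  | succ k IH =>
      rw [pow_succ, Matrix.mul_apply]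
      exact Finset.sum_nonneg fun x _ => mul_nonneg (IH i x) (tascl_nonneg hε0 hε1 x j)

lemma tascl_chain (hε0 : 0 < ε) (hε1 : ε < 1) {a b : ℕ} {i m j : Fin N}
    (h1 : 0 < (tasclP βn βd ζ ε ^ a) i m) (h2 : 0 < (tasclP βn βd ζ ε ^ b) m j) :
    0 < (tasclP βn βd ζ ε ^ (a + b)) i j := by
  rw [pow_add, Matrix.mul_apply]
  exact Finset.sum_pos'
    (fun x _ => mul_nonneg (tascl_pow_nonneg hε0 hε1 a i x) (tascl_pow_nonneg hε0 hε1 b x j))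
    ⟨m, Finset.mem_univ m, mul_pos h1 h2⟩

lemma step_down (hβd : 0 < βd) (hβ : βd < βn) (hε0 : 0 < ε) (hε1 : ε < 1)
    {s t : Fin N} (h1 : βd < (s : ℕ)) (h2 : (t : ℕ) + βd = (s : ℕ)) :
    0 < tasclP βn βd ζ ε s t := by
  simp only [tasclP]
  rw [if_neg (by omega)]
  by_cases hsafe : (s : ℕ) ≤ βn * ζ + βd
  · rw [if_pos hsafe, if_pos (by omega), if_neg (by omega)]
    linarith
  · rw [if_neg hsafe, if_pos (by omega)]
    norm_num

lemma step_up (hβd : 0 < βd) (hβ : βd < βn) (hε0 : 0 < ε) (hε1 : ε < 1)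
    {s t : Fin N} (h1 : βd < (s : ℕ)) (h2 : (s : ℕ) ≤ βn * ζ + βd)
    (h3 : (t : ℕ) + βd = (s : ℕ) + βn) :
    0 < tasclP βn βd ζ ε s t := by
  simp only [tasclP]
  rw [if_neg (by omega), if_pos h2, if_neg (by omega), if_pos (by omega)]
  linarith

lemma step_jump (hβd : 0 < βd) (hβ : βd < βn) (hε0 : 0 < ε) (hε1 : ε < 1)
    {s t : Fin N} (h1 : (s : ℕ) ≤ βd) (h2 : (t : ℕ) = βn) :
    0 < tasclP βn βd ζ ε s t := by
  simp only [tasclP]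
  rw [if_pos h1, if_neg (by omega), if_pos h2]
  linarith

lemma step_idle0 (hβd : 0 < βd) (hβ : βd < βn) (hε0 : 0 < ε) (hε1 : ε < 1)
    {s t : Fin N} (h1 : (s : ℕ) ≤ βd) (h2 : (t : ℕ) = 0) :
    0 < tasclP βn βd ζ ε s t := by
  simp only [tasclP]
  rw [if_pos h1, if_pos h2, if_neg (by omega)]
  linarith

/-- single step as `P^1`. -/
lemma step_pow (hε0 : 0 < ε) {s t : Fin N} (h : 0 < tasclP βn βd ζ ε s t) :
    0 < (tasclP βn βd ζ ε ^ 1) s t := by rwa [pow_one]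

/-- down chain: from `t + j*βd` down to `t` in `j` steps, provided `1 ≤ t`. -/
lemma downs (hβd : 0 < βd) (hβ : βd < βn) (hε0 : 0 < ε) (hε1 : ε < 1)
    (j : ℕ) (t v : Fin N) (ht : 1 ≤ (t : ℕ)) (hv : (v : ℕ) = (t : ℕ) + j * βd) :
    0 < (tasclP βn βd ζ ε ^ j) v t := by
  induction j generalizing v with
  | zero =>
      have : v = t := Fin.ext (by omega)
      rw [this, pow_zero, Matrix.one_apply_eq]; norm_num
  | succ j IH =>
      have hmul : (j + 1) * βd = j * βd + βd := by ring
      have hle : (t : ℕ) + j * βd < N := by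
        have := v.isLt; omega
      set v' : Fin N := ⟨(t : ℕ) + j * βd, hle⟩ with hv'
      have hval : (v' : ℕ) = (t : ℕ) + j * βd := rfl
      have hstep : 0 < tasclP βn βd ζ ε v v' :=
        step_down hβd hβ hε0 hε1 (by omega) (by omega)
      have : 0 < (tasclP βn βd ζ ε ^ (1 + j)) v t :=
        tascl_chain hε0 hε1 (step_pow hε0 hstep) (IH v' rfl)
      rwa [Nat.add_comm 1 j] at this

/-- from any state strictly above `βd`, we can reach state `0` -/
lemma to_zero (hβd : 0 < βd) (hβ : βd < βn) (hε0 : 0 < ε) (hε1 : ε < 1)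
    (i : Fin N) : ∃ a : ℕ, 1 ≤ a ∧ 0 < (tasclP βn βd ζ ε ^ a) i ⟨0, by omega⟩ := by
  obtain ⟨m, hm⟩ : ∃ m, (i : ℕ) = m := ⟨i, rfl⟩
  induction m using Nat.strong_induction_on generalizing i with
  | _ m IH =>
    by_cases hidle : (i : ℕ) ≤ βd
    · exact ⟨1, le_refl 1, step_pow hε0 (step_idle0 hβd hβ hε0 hε1 hidle rfl)⟩
    · have hlt : (i : ℕ) - βd < N := by have := i.isLt; omega
      set i' : Fin N := ⟨(i : ℕ) - βd, hlt⟩ with hi'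
      have hval : (i' : ℕ) = (i : ℕ) - βd := rfl
      obtain ⟨a, ha1, ha⟩ := IH ((i : ℕ) - βd) (by omega) i' rfl
      refine ⟨1 + a, by omega, ?_⟩
      exact tascl_chain hε0 hε1
        (step_pow hε0 (step_down hβd hβ hε0 hε1 (by omega) (by omega))) ha

/-- from a safe state reach some state strictly above `βn*ζ + βd`. -/
lemma reach_high (hβd : 0 < βd) (hβ : βd < βn) (hζ : 0 < ζ) (hε0 : 0 < ε) (hε1 : ε < 1)
    (s : Fin N) (h1 : βd < (s : ℕ)) (h2 : (s : ℕ) ≤ βn * ζ + βd) :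
    ∃ (q : Fin N) (k : ℕ), βn * ζ + βd < (q : ℕ) ∧ 0 < (tasclP βn βd ζ ε ^ k) s q := by
  obtain ⟨m, hm⟩ : ∃ m, βn * ζ + βd - (s : ℕ) = m := ⟨_, rfl⟩
  induction m using Nat.strong_induction_on generalizing s with
  | _ m IH =>
    have hlt : (s : ℕ) + βn - βd < N := by omega
    set s' : Fin N := ⟨(s : ℕ) + βn - βd, hlt⟩ with hs'
    have hval : (s' : ℕ) = (s : ℕ) + βn - βd := rfl
    have hstep : 0 < tasclP βn βd ζ ε s s' :=
      step_up hβd hβ hε0 hε1 h1 h2 (by omega)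
    by_cases hhigh : βn * ζ + βd < (s' : ℕ)
    · exact ⟨s', 1, hhigh, step_pow hε0 hstep⟩
    · have hs'1 : βd < (s' : ℕ) := by omega
      have hs'2 : (s' : ℕ) ≤ βn * ζ + βd := by omega
      obtain ⟨q, k, hq, hk⟩ := IH (βn * ζ + βd - (s' : ℕ)) (by omega) s' hs'1 hs'2 rfl
      exact ⟨q, 1 + k, hq, tascl_chain hε0 hε1 (step_pow hε0 hstep) hk⟩

/-- down from any state above `βn*ζ` into the window `(βn*ζ, βn*ζ+βd]`,
preserving residue mod `βd`. -/
lemma down_to_window (hβd : 0 < βd) (hβ : βd < βn) (hζ : 0 < ζ) (hε0 : 0 < ε) (hε1 : ε < 1)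
    (v : Fin N) (h1 : βn * ζ < (v : ℕ)) :
    ∃ (w : Fin N) (j : ℕ), βn * ζ < (w : ℕ) ∧ (w : ℕ) ≤ βn * ζ + βd ∧
      (w : ℕ) ≡ (v : ℕ) [MOD βd] ∧ 0 < (tasclP βn βd ζ ε ^ j) v w := by
  obtain ⟨m, hm⟩ : ∃ m, (v : ℕ) = m := ⟨_, rfl⟩
  induction m using Nat.strong_induction_on generalizing v with
  | _ m IH =>
    by_cases hin : (v : ℕ) ≤ βn * ζ + βd
    · refine ⟨v, 0, h1, hin, Nat.ModEq.refl _, ?_⟩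
      rw [pow_zero, Matrix.one_apply_eq]; norm_num
    · have hβn1 : βd < βn * ζ := by nlinarith
      have hlt : (v : ℕ) - βd < N := by have := v.isLt; omega
      set v' : Fin N := ⟨(v : ℕ) - βd, hlt⟩ with hv'
      have hval : (v' : ℕ) = (v : ℕ) - βd := rfl
      have hstep : 0 < tasclP βn βd ζ ε v v' :=
        step_down hβd hβ hε0 hε1 (by omega) (by omega)
      obtain ⟨w, j, hw1, hw2, hw3, hw4⟩ :=
        IH ((v : ℕ) - βd) (by omega) v' (by omega) rfl
      refine ⟨w, 1 + j, hw1, hw2, ?_, tascl_chain hε0 hε1 (step_pow hε0 hstep) hw4⟩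
      calc (w : ℕ) ≡ (v' : ℕ) [MOD βd] := hw3
        _ ≡ (v' : ℕ) + βd [MOD βd] := (Nat.add_mod_right _ _).symm
        _ = (v : ℕ) := by omega

end Aux

section Aux2

variable {βn βd ζ : ℕ} {ε : ℝ}

local notation "N" => βn * ζ + βn + 1

lemma solve_mod (hβd : 0 < βd) (hcop : Nat.Coprime βn βd) (c d : ℕ) :
    ∃ k, c + k * βn ≡ d [MOD βd] := by
  rcases Nat.lt_or_ge 1 βd with h | h
  · obtain ⟨x, -, hx⟩ := Nat.exists_mul_mod_eq_one_of_coprime hcop h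
    have h1 : βn * x ≡ 1 [MOD βd] := by
      unfold Nat.ModEq
      rw [hx, Nat.mod_eq_of_lt h]
    refine ⟨x * (βd - c % βd + d), ?_⟩
    have h2 : c + (x * (βd - c % βd + d)) * βn ≡ c + (βd - c % βd + d) [MOD βd] := by
      refine Nat.ModEq.add_left c ?_
      calc (x * (βd - c % βd + d)) * βn = (βn * x) * (βd - c % βd + d) := by ring
        _ ≡ 1 * (βd - c % βd + d) [MOD βd] := Nat.ModEq.mul_right _ h1
        _ = βd - c % βd + d := one_mul _
    have hq : βd * (c / βd) + c % βd = c := Nat.div_add_mod c βd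
    have hmod : c % βd < βd := Nat.mod_lt _ hβd
    have h3 : c + (βd - c % βd + d) = d + βd * (c / βd + 1) := by
      have : βd * (c / βd + 1) = βd * (c / βd) + βd := by ring
      omega
    have h4 : d + βd * (c / βd + 1) ≡ d [MOD βd] := by
      unfold Nat.ModEq
      exact Nat.add_mul_mod_self_left d βd _
    exact h2.trans (h3 ▸ h4)
  · have hβd1 : βd = 1 := by omega
    exact ⟨0, by unfold Nat.ModEq; simp [hβd1, Nat.mod_one]⟩

lemma orbit (hβd : 0 < βd) (hβ : βd < βn) (hζ : 0 < ζ) (hε0 : 0 < ε) (hε1 : ε < 1) :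
    ∃ w0 : Fin N, ∀ k : ℕ, ∃ (w : Fin N) (n : ℕ),
      βn * ζ < (w : ℕ) ∧ (w : ℕ) ≤ βn * ζ + βd ∧
      (w : ℕ) ≡ (w0 : ℕ) + k * βn [MOD βd] ∧
      0 < (tasclP βn βd ζ ε ^ n) ⟨βn, by omega⟩ w := by
  have hβζ : βn ≤ βn * ζ := Nat.le_mul_of_pos_right βn hζ
  set s0 : Fin N := ⟨βn, by omega⟩ with hs0
  have hs0v : (s0 : ℕ) = βn := rfl
  obtain ⟨q, k1, hq, hk1⟩ := reach_high hβd hβ hζ hε0 hε1 s0 (by omega) (by omega)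
  obtain ⟨w0, j0, hw01, hw02, hw03, hw04⟩ :=
    down_to_window hβd hβ hζ hε0 hε1 q (by omega)
  have hbase : 0 < (tasclP βn βd ζ ε ^ (k1 + j0)) s0 w0 := tascl_chain hε0 hε1 hk1 hw04
  refine ⟨w0, ?_⟩
  intro k
  induction k with
  | zero => exact ⟨w0, k1 + j0, hw01, hw02, by simpa using Nat.ModEq.refl _, hbase⟩
  | succ k IH =>
      obtain ⟨w, n, hw1, hw2, hw3, hw4⟩ := IH
      have hlt : (w : ℕ) + βn - βd < N := by omega
      set v : Fin N := ⟨(w : ℕ) + βn - βd, hlt⟩ with hv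
      have hval : (v : ℕ) = (w : ℕ) + βn - βd := rfl
      have hstep : 0 < tasclP βn βd ζ ε w v :=
        step_up hβd hβ hε0 hε1 (by omega) (by omega) (by omega)
      obtain ⟨w', j', hw'1, hw'2, hw'3, hw'4⟩ :=
        down_to_window hβd hβ hζ hε0 hε1 v (by omega)
      refine ⟨w', n + 1 + j', hw'1, hw'2, ?_, ?_⟩
      · calc (w' : ℕ) ≡ (v : ℕ) [MOD βd] := hw'3
          _ ≡ (v : ℕ) + βd [MOD βd] := (Nat.add_mod_right _ _).symm
          _ = (w : ℕ) + βn := by omega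
          _ ≡ (w0 : ℕ) + k * βn + βn [MOD βd] := Nat.ModEq.add_right βn hw3
          _ = (w0 : ℕ) + (k + 1) * βn := by ring
      · exact tascl_chain hε0 hε1 (tascl_chain hε0 hε1 hw4 (step_pow hε0 hstep)) hw'4

lemma from_zero (hβd : 0 < βd) (hβ : βd < βn) (hcop : Nat.Coprime βn βd)
    (hζ : 0 < ζ) (hε0 : 0 < ε) (hε1 : ε < 1)
    (t : Fin N) (ht : 1 ≤ (t : ℕ)) :
    ∃ b : ℕ, 0 < (tasclP βn βd ζ ε ^ b) ⟨0, by omega⟩ t := by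
  have hβζ : βn ≤ βn * ζ := Nat.le_mul_of_pos_right βn hζ
  set z : Fin N := ⟨0, by omega⟩ with hz
  set s0 : Fin N := ⟨βn, by omega⟩ with hs0
  have hzv : (z : ℕ) = 0 := rfl
  have hs0v : (s0 : ℕ) = βn := rfl
  have step1 : 0 < (tasclP βn βd ζ ε ^ 1) z s0 :=
    step_pow hε0 (step_jump hβd hβ hε0 hε1 (by omega) hs0v)
  obtain ⟨w0, H⟩ := orbit hβd hβ hζ hε0 hε1 (ε := ε)
  obtain ⟨k, hk⟩ := solve_mod hβd hcop ((w0 : ℕ) + βn) (t : ℕ)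
  obtain ⟨w, n, hw1, hw2, hw3, hw4⟩ := H k
  have hlt : (w : ℕ) + βn - βd < N := by omega
  set v : Fin N := ⟨(w : ℕ) + βn - βd, hlt⟩ with hv
  have hval : (v : ℕ) = (w : ℕ) + βn - βd := rfl
  have hstep : 0 < tasclP βn βd ζ ε w v :=
    step_up hβd hβ hε0 hε1 (by omega) (by omega) (by omega)
  -- congruence : v ≡ t mod βd
  have hcong : (v : ℕ) ≡ (t : ℕ) [MOD βd] := by
    calc (v : ℕ) ≡ (v : ℕ) + βd [MOD βd] := (Nat.add_mod_right _ _).symm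
      _ = (w : ℕ) + βn := by omega
      _ ≡ (w0 : ℕ) + k * βn + βn [MOD βd] := Nat.ModEq.add_right βn hw3
      _ = (w0 : ℕ) + βn + k * βn := by ring
      _ ≡ (t : ℕ) [MOD βd] := hk
  have htle : (t : ℕ) ≤ (v : ℕ) := by
    by_contra hvt
    push_neg at hvt
    have hdvd : βd ∣ (t : ℕ) - (v : ℕ) := (Nat.modEq_iff_dvd' (le_of_lt hvt)).mp hcong
    have h1 : 1 ≤ (t : ℕ) - (v : ℕ) := by omega
    have h2 : (t : ℕ) - (v : ℕ) < βd := by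
      have := t.isLt; omega
    have := Nat.le_of_dvd (by omega) hdvd
    omega
  have hdvd : βd ∣ (v : ℕ) - (t : ℕ) := (Nat.modEq_iff_dvd' htle).mp hcong.symm
  have hjj : ((v : ℕ) - (t : ℕ)) / βd * βd = (v : ℕ) - (t : ℕ) := Nat.div_mul_cancel hdvd
  have hveq : (v : ℕ) = (t : ℕ) + (((v : ℕ) - (t : ℕ)) / βd) * βd := by omega
  have hdowns : 0 < (tasclP βn βd ζ ε ^ (((v : ℕ) - (t : ℕ)) / βd)) v t :=
    downs hβd hβ hε0 hε1 _ t v ht hveq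
  exact ⟨1 + n + 1 + ((v : ℕ) - (t : ℕ)) / βd,
    tascl_chain hε0 hε1
      (tascl_chain hε0 hε1 (tascl_chain hε0 hε1 step1 hw4) (step_pow hε0 hstep)) hdowns⟩

end Aux2

/-- The TA-SCL Markov chain is aperiodic: for every state `i`, the set of return
times `{k ≥ 1 : (P^k) i i > 0}` is nonempty and its greatest common divisor is `1`,
i.e. every common divisor of the set equals `1`. -/
theorem tascl_aperiodic (βn βd ζ : ℕ) (hβd : 0 < βd) (hβ : βd < βn)
    (hcop : Nat.Coprime βn βd) (hζ : 0 < ζ) (ε : ℝ) (hε0 : 0 < ε) (hε1 : ε < 1) :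
    ∀ i : Fin (βn * ζ + βn + 1),
      (∃ k : ℕ, 1 ≤ k ∧ 0 < (tasclP βn βd ζ ε ^ k) i i) ∧
      (∀ d : ℕ, (∀ k : ℕ, 1 ≤ k → 0 < (tasclP βn βd ζ ε ^ k) i i → d ∣ k) → d = 1) := by
  intro i
  set z : Fin (βn * ζ + βn + 1) := ⟨0, by omega⟩ with hz
  have hzv : (z : ℕ) = 0 := rfl
  obtain ⟨a, ha1, ha⟩ := to_zero hβd hβ hε0 hε1 i
  have hself : 0 < (tasclP βn βd ζ ε ^ 1) z z :=
    step_pow hε0 (step_idle0 hβd hβ hε0 hε1 (by omega) hzv)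
  obtain ⟨b, hb⟩ : ∃ b, 0 < (tasclP βn βd ζ ε ^ b) z i := by
    by_cases hi : (i : ℕ) = 0
    · refine ⟨0, ?_⟩
      have : z = i := Fin.ext (by omega)
      rw [this, pow_zero, Matrix.one_apply_eq]
      norm_num
    · exact from_zero hβd hβ hcop hζ hε0 hε1 i (by omega)
  have hk1 : 0 < (tasclP βn βd ζ ε ^ (a + b)) i i := tascl_chain hε0 hε1 ha hb
  have hk2 : 0 < (tasclP βn βd ζ ε ^ (a + (1 + b))) i i :=
    tascl_chain hε0 hε1 ha (tascl_chain hε0 hε1 hself hb)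
  refine ⟨⟨a + b, by omega, hk1⟩, ?_⟩
  intro d hd
  have h1 := hd (a + b) (by omega) hk1
  have h2 := hd (a + (1 + b)) (by omega) hk2
  have hd1 : d ∣ 1 := by
    have h3 := Nat.dvd_sub h2 h1
    simpa [show a + (1 + b) - (a + b) = 1 by omega] using h3
  exact Nat.dvd_one.mp hd1
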